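/- Let A be a CIRL and A* its Galatos–Raftery double. Then A* satisfies the Nelson equation ((x² ⇒ y) ∧ ((¬y)² ⇒ ¬x)) ⇒ (x ⇒ y) = 1 for all x, y if and only if A is an implicative lattice (i.e., a ∧ b = a*b for all a,b, equivalently a² = a). -/
import Mathlib


/-- A commutative integral residuated lattice (CIRL): a lattice with maximum
element `1`, a commutative monoid structure with unit `1`, and a residuated
pair `(*, ⇨)`: `a * b ≤ c ↔ b ≤ a ⇨ c`. -/
class CIRL (α : Type*) extends Lattice α, CommMonoid α, HImp α where
  le_top : ∀ a : α, a ≤ 1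
  resid : ∀ a b c : α, a * b ≤ c ↔ b ≤ a ⇨ c

/-! The Galatos–Raftery doubling construction `A* = A ∪ ¬A`, encoded on `α ⊕ α`
where `.inr a` is the element `a ∈ A` and `.inl a` is its disjoint copy `¬a`. -/

variable {α : Type*} [CIRL α]

/-- The order on the double: it extends the order of `A`, puts every `¬a`
below every `b ∈ A`, and `¬a ≤ ¬b` iff `b ≤ a`. -/
def dle : α ⊕ α → α ⊕ α → Prop
  | .inr a, .inr b => a ≤ b
  | .inl _, .inr _ => True
  | .inr _, .inl _ => False
  | .inl a, .inl b => b ≤ a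

/-- Join on the double (lattice operations extended via De Morgan laws). -/
def dsup : α ⊕ α → α ⊕ α → α ⊕ α
  | .inr a, .inr b => .inr (a ⊔ b)
  | .inl _, .inr b => .inr b
  | .inr a, .inl _ => .inr a
  | .inl a, .inl b => .inl (a ⊓ b)

/-- Meet on the double (lattice operations extended via De Morgan laws). -/
def dinf : α ⊕ α → α ⊕ α → α ⊕ α
  | .inr a, .inr b => .inr (a ⊓ b)
  | .inl a, .inr _ => .inl a
  | .inr _, .inl b => .inl b
  | .inl a, .inl b => .inl (a ⊔ b)

/-- Monoid operation on the double: `a * ¬b := ¬(a ⇨ b)`, `¬a * ¬b := ¬1`. -/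
def dmul : α ⊕ α → α ⊕ α → α ⊕ α
  | .inr a, .inr b => .inr (a * b)
  | .inr a, .inl b => .inl (a ⇨ b)
  | .inl a, .inr b => .inl (b ⇨ a)
  | .inl _, .inl _ => .inl 1

/-- Implication on the double: `a ⇨ ¬b := ¬(a*b)`, `¬a ⇨ ¬b := b ⇨ a`,
`¬a ⇨ b := 1`. -/
def dimp : α ⊕ α → α ⊕ α → α ⊕ α
  | .inr a, .inr b => .inr (a ⇨ b)
  | .inr a, .inl b => .inl (a * b)
  | .inl _, .inr _ => .inr 1
  | .inl a, .inl b => .inr (b ⇨ a)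

/-- Top element `1` of the double. -/
def done : α ⊕ α := .inr 1

/-- Bottom element `0 := ¬1` of the double. -/
def dzero : α ⊕ α := .inl 1

/-- Negation `¬x := x ⇨ 0` on the double. -/
def dneg (x : α ⊕ α) : α ⊕ α := dimp x dzero


section Aux
variable {α : Type*} [CIRL α]

private lemma resid' {a b c : α} : a * b ≤ c ↔ b ≤ a ⇨ c := CIRL.resid a b c

private lemma le_one' (a : α) : a ≤ 1 := CIRL.le_top a

private lemma mul_imp_le' (a b : α) : a * (a ⇨ b) ≤ b := resid'.mpr le_rfl

private lemma mul_mono_right' (a : α) {b c : α} (h : b ≤ c) : a * b ≤ a * c :=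
  resid'.mpr (h.trans (resid'.mp le_rfl))

private lemma mul_le_left' (a b : α) : a * b ≤ a := by
  have := mul_mono_right' a (le_one' b); rwa [mul_one] at this

private lemma mul_le_right' (a b : α) : a * b ≤ b := by
  rw [mul_comm]; exact mul_le_left' b a

private lemma one_imp' (a : α) : (1 : α) ⇨ a = a :=
  le_antisymm (by have := mul_imp_le' 1 a; rwa [one_mul] at this)
    (resid'.mp (by rw [one_mul]))

private lemma imp_one' (a : α) : a ⇨ (1 : α) = 1 :=
  le_antisymm (le_one' _) (resid'.mp (le_one' _))

private lemma imp_eq_one_of_le' {a b : α} (h : a ≤ b) : a ⇨ b = 1 :=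
  le_antisymm (le_one' _) (resid'.mp (by rwa [mul_one]))

end Aux

/-- The double `A*` satisfies the Nelson equation
`((x² ⇒ y) ∧ ((¬y)² ⇒ ¬x)) ⇒ (x ⇒ y) = 1` iff `A` is an implicative lattice
(i.e. `a ∧ b = a * b` for all `a, b`). -/

theorem stmt18 {α : Type*} [CIRL α] :
    (∀ x y : α ⊕ α,
        dimp (dinf (dimp (dmul x x) y) (dimp (dmul (dneg y) (dneg y)) (dneg x)))
          (dimp x y) = done) ↔
      (∀ a b : α, a ⊓ b = a * b) := by
  constructor
  · intro h a b
    have key : ∀ c : α, c * c = c := by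
      intro c
      have hc := h (.inr c) (.inr (c * c))
      simp only [dmul, dneg, dzero, dimp, dinf, done] at hc
      have h2 : ((c * c ⇨ c * c) ⊓ (c * 1 ⇨ 1)) ⇨ (c ⇨ c * c) = 1 :=
        Sum.inr.inj hc
      have hM : (1 : α) ≤ (c * c ⇨ c * c) ⊓ (c * 1 ⇨ 1) :=
        le_inf (resid'.mp (by rw [mul_one])) (resid'.mp (le_one' _))
      have h3 := mul_imp_le' ((c * c ⇨ c * c) ⊓ (c * 1 ⇨ 1)) (c ⇨ c * c)
      rw [h2, mul_one] at h3
      have h4 : (1 : α) ≤ c ⇨ c * c := hM.trans h3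
      have h5 : c ≤ c * c := by
        have := mul_mono_right' c h4
        rw [mul_one] at this
        exact this.trans (mul_imp_le' c _)
      exact le_antisymm (mul_le_left' c c) h5
    refine le_antisymm ?_ (le_inf (mul_le_left' a b) (mul_le_right' a b))
    calc a ⊓ b = (a ⊓ b) * (a ⊓ b) := (key _).symm
      _ ≤ a * (a ⊓ b) := by
          rw [mul_comm (a ⊓ b), mul_comm a]; exact mul_mono_right' _ inf_le_left
      _ ≤ a * b := mul_mono_right' _ inf_le_right
  · intro h x y
    have sq : ∀ c : α, c * c = c := fun c => (h c c).symm.trans (inf_idem c)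
    cases x with
    | inr a =>
      cases y with
      | inr b =>
        simp only [dmul, dneg, dzero, dimp, dinf, done, Sum.inr.injEq]
        apply imp_eq_one_of_le'
        rw [sq, mul_one, imp_one']
        exact inf_le_left
      | inl b =>
        simp only [dmul, dneg, dzero, dimp, dinf, done, Sum.inr.injEq]
        apply imp_eq_one_of_le'
        rw [sq]
        exact le_sup_left
    | inl a =>
      cases y with
      | inr b =>
        simp only [dmul, dneg, dzero, dimp, dinf, done, Sum.inr.injEq]
        exact imp_eq_one_of_le' (le_one' _)
      | inl b =>
        simp only [dmul, dneg, dzero, dimp, dinf, done, Sum.inr.injEq]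
        apply imp_eq_one_of_le'
        rw [one_imp', one_imp', sq, imp_one']
        exact inf_le_right
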